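/- Let A ⊆ ℝ^d be a finite set, θ̂, θ* ∈ ℝ^d, Σ positive definite, β > 0 with ‖θ̂ − θ*‖_Σ ≤ β. Let x* = argmax_{x∈A} ⟨x, θ*⟩, x_t = argmax_{x∈A} ⟨x, θ̂⟩, and y_t = argmax_{y∈A} (⟨y, θ̂⟩ + 2β‖x_t − y‖_{Σ⁻¹}). Then 2⟨x*, θ*⟩ − ⟨x_t + y_t, θ*⟩ ≤ 3β‖x_t − y_t‖_{Σ⁻¹}. -/

import Mathlib

open Matrix

private lemma psd_symm {n : ℕ} {M : Matrix (Fin n) (Fin n) ℝ} (hM : M.IsHermitian)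
    (u v : Fin n → ℝ) : u ⬝ᵥ M.mulVec v = v ⬝ᵥ M.mulVec u := by
  rw [dotProduct_mulVec, ← mulVec_transpose]
  rw [show Mᵀ = M from by simpa using hM.eq]
  exact dotProduct_comm _ _

private lemma psd_cs {n : ℕ} {M : Matrix (Fin n) (Fin n) ℝ} (hM : M.PosSemidef)
    (u v : Fin n → ℝ) :
    u ⬝ᵥ M.mulVec v ≤
      Real.sqrt (u ⬝ᵥ M.mulVec u) * Real.sqrt (v ⬝ᵥ M.mulVec v) := by
  have ha : 0 ≤ u ⬝ᵥ M.mulVec u := by simpa using hM.dotProduct_mulVec_nonneg u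
  have hb : 0 ≤ v ⬝ᵥ M.mulVec v := by simpa using hM.dotProduct_mulVec_nonneg v
  have hsq : (u ⬝ᵥ M.mulVec v) ^ 2 ≤ (u ⬝ᵥ M.mulVec u) * (v ⬝ᵥ M.mulVec v) := by
    have hqd : ∀ t : ℝ,
        0 ≤ (v ⬝ᵥ M.mulVec v) * (t * t) + (2 * (u ⬝ᵥ M.mulVec v)) * t +
          (u ⬝ᵥ M.mulVec u) := by
      intro t
      have h0 : 0 ≤ (u + t • v) ⬝ᵥ M.mulVec (u + t • v) := by simpa using hM.dotProduct_mulVec_nonneg (u + t • v)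
      have hexp : (u + t • v) ⬝ᵥ M.mulVec (u + t • v)
          = (v ⬝ᵥ M.mulVec v) * (t * t) + (2 * (u ⬝ᵥ M.mulVec v)) * t +
            (u ⬝ᵥ M.mulVec u) := by
        simp only [mulVec_add, mulVec_smul, add_dotProduct, smul_dotProduct,
          dotProduct_add, dotProduct_smul, smul_eq_mul]
        rw [psd_symm hM.1 v u]
        ring
      linarith [hexp ▸ h0]
    have := discrim_le_zero hqd
    rw [discrim] at this
    nlinarith
  calc u ⬝ᵥ M.mulVec v ≤ |u ⬝ᵥ M.mulVec v| := le_abs_self _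
    _ = Real.sqrt ((u ⬝ᵥ M.mulVec v) ^ 2) := (Real.sqrt_sq_eq_abs _).symm
    _ ≤ Real.sqrt ((u ⬝ᵥ M.mulVec u) * (v ⬝ᵥ M.mulVec v)) := Real.sqrt_le_sqrt hsq
    _ = _ := Real.sqrt_mul ha _

private lemma psd_triangle {n : ℕ} {M : Matrix (Fin n) (Fin n) ℝ} (hM : M.PosSemidef)
    (u v : Fin n → ℝ) :
    Real.sqrt ((u + v) ⬝ᵥ M.mulVec (u + v)) ≤
      Real.sqrt (u ⬝ᵥ M.mulVec u) + Real.sqrt (v ⬝ᵥ M.mulVec v) := by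
  have ha : 0 ≤ u ⬝ᵥ M.mulVec u := by simpa using hM.dotProduct_mulVec_nonneg u
  have hb : 0 ≤ v ⬝ᵥ M.mulVec v := by simpa using hM.dotProduct_mulVec_nonneg v
  have hcs := psd_cs hM u v
  have hexp : (u + v) ⬝ᵥ M.mulVec (u + v)
      ≤ (Real.sqrt (u ⬝ᵥ M.mulVec u) + Real.sqrt (v ⬝ᵥ M.mulVec v)) ^ 2 := by
    have h1 : (u + v) ⬝ᵥ M.mulVec (u + v)
        = u ⬝ᵥ M.mulVec u + 2 * (u ⬝ᵥ M.mulVec v) + v ⬝ᵥ M.mulVec v := by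
      simp only [mulVec_add, add_dotProduct, dotProduct_add]
      rw [psd_symm hM.1 v u]; ring
    have h2 := Real.sq_sqrt ha
    have h3 := Real.sq_sqrt hb
    nlinarith
  calc Real.sqrt ((u + v) ⬝ᵥ M.mulVec (u + v))
      ≤ Real.sqrt ((Real.sqrt (u ⬝ᵥ M.mulVec u) + Real.sqrt (v ⬝ᵥ M.mulVec v)) ^ 2) :=
        Real.sqrt_le_sqrt hexp
    _ = _ := Real.sqrt_sq (by positivity)

theorem stmt_13 {d : ℕ} (A : Finset (Fin d → ℝ))
    (Sig : Matrix (Fin d) (Fin d) ℝ) (hSig : Sig.PosDef)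
    (β : ℝ) (hβ : 0 < β) (θhat θstar xstar xt yt : Fin d → ℝ)
    (hconc : Real.sqrt ((θhat - θstar) ⬝ᵥ Sig.mulVec (θhat - θstar)) ≤ β)
    (hxstar : xstar ∈ A) (hopt : ∀ x ∈ A, x ⬝ᵥ θstar ≤ xstar ⬝ᵥ θstar)
    (hxt : xt ∈ A) (hxtmax : ∀ x ∈ A, x ⬝ᵥ θhat ≤ xt ⬝ᵥ θhat)
    (hyt : yt ∈ A)
    (hytmax : ∀ y ∈ A,
      y ⬝ᵥ θhat + 2 * β * Real.sqrt ((xt - y) ⬝ᵥ Sig⁻¹.mulVec (xt - y)) ≤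
      yt ⬝ᵥ θhat + 2 * β * Real.sqrt ((xt - yt) ⬝ᵥ Sig⁻¹.mulVec (xt - yt))) :
    2 * (xstar ⬝ᵥ θstar) - (xt + yt) ⬝ᵥ θstar ≤
      3 * β * Real.sqrt ((xt - yt) ⬝ᵥ Sig⁻¹.mulVec (xt - yt)) := by
  have hMpsd : (Sig⁻¹).PosSemidef := hSig.posSemidef.inv
  have hdet : IsUnit Sig.det := hSig.det_pos.ne'.isUnit
  have hinv : Sig⁻¹ * Sig = 1 := nonsing_inv_mul _ hdet
  -- key: for any v, v ⬝ᵥ (θhat - θstar) ≤ β * ‖v‖_{Σ⁻¹}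
  have hkey : ∀ v : Fin d → ℝ,
      v ⬝ᵥ (θhat - θstar) ≤ β * Real.sqrt (v ⬝ᵥ Sig⁻¹.mulVec v) := by
    intro v
    set g : Fin d → ℝ := θhat - θstar
    have hmul : Sig⁻¹.mulVec (Sig.mulVec g) = g := by
      rw [mulVec_mulVec, hinv, one_mulVec]
    have hcs := psd_cs hMpsd v (Sig.mulVec g)
    rw [show (Sig.mulVec g) ⬝ᵥ Sig⁻¹.mulVec (Sig.mulVec g) = g ⬝ᵥ Sig.mulVec g from by
      rw [hmul, dotProduct_comm]] at hcs
    have hv0 : 0 ≤ Real.sqrt (v ⬝ᵥ Sig⁻¹.mulVec v) := Real.sqrt_nonneg _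
    calc v ⬝ᵥ g = v ⬝ᵥ Sig⁻¹.mulVec (Sig.mulVec g) := by rw [hmul]
      _ ≤ Real.sqrt (v ⬝ᵥ Sig⁻¹.mulVec v) * Real.sqrt (g ⬝ᵥ Sig.mulVec g) := hcs
      _ ≤ Real.sqrt (v ⬝ᵥ Sig⁻¹.mulVec v) * β := mul_le_mul_of_nonneg_left hconc hv0
      _ = β * Real.sqrt (v ⬝ᵥ Sig⁻¹.mulVec v) := mul_comm _ _
  have hneg : ∀ w : Fin d → ℝ, (-w) ⬝ᵥ Sig⁻¹.mulVec (-w) = w ⬝ᵥ Sig⁻¹.mulVec w := by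
    intro w; simp [mulVec_neg]
  set N1 : ℝ := Real.sqrt ((xt - xstar) ⬝ᵥ Sig⁻¹.mulVec (xt - xstar)) with hN1
  set Nty : ℝ := Real.sqrt ((xt - yt) ⬝ᵥ Sig⁻¹.mulVec (xt - yt)) with hNty
  have hA1 : (xt - xstar) ⬝ᵥ (θhat - θstar) ≤ β * N1 := hkey _
  -- triangle: ‖yt - xstar‖ ≤ Nty + N1
  have htr : Real.sqrt ((yt - xstar) ⬝ᵥ Sig⁻¹.mulVec (yt - xstar)) ≤ Nty + N1 := by
    have h := psd_triangle hMpsd (yt - xt) (xt - xstar)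
    rw [show (yt - xt) + (xt - xstar) = yt - xstar from by abel] at h
    rw [show yt - xt = -(xt - yt) from by abel, hneg] at h
    exact h
  have hA2 : (yt - xstar) ⬝ᵥ (θhat - θstar) ≤ β * (Nty + N1) := by
    calc (yt - xstar) ⬝ᵥ (θhat - θstar)
        ≤ β * Real.sqrt ((yt - xstar) ⬝ᵥ Sig⁻¹.mulVec (yt - xstar)) := hkey _
      _ ≤ β * (Nty + N1) := mul_le_mul_of_nonneg_left htr hβ.le
  have h3 : xstar ⬝ᵥ θhat ≤ xt ⬝ᵥ θhat := hxtmax xstar hxstar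
  have h4 := hytmax xstar hxstar
  rw [show xt - xstar = xt - xstar from rfl] at h4
  simp only [sub_dotProduct, dotProduct_sub, add_dotProduct] at hA1 hA2 ⊢
  rw [← hN1] at h4
  linarith
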